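/- arXiv:1208.5258 — 7 statements merged into one kernel-verified Lean document; each statement's English description precedes it below -/
import Mathlib

section
/- The determinacy relation generated by the rules (Summation: {(q_1,v_1),...,(q_k,v_k)} → (q_1+...+q_k, v_1+...+v_k); Scalar multiplication: (q,v) → (cq, c²v) for any c ∈ ℝ; Relaxation: (q,v) → (q,v') for v ≤ v'; Transitivity) holds between a multiset S = {(q_1,v_1),...,(q_m,v_m)} and a query (q,v) if and only if there exist c_1,...,c_m ∈ ℝ with c_1 q_1 + ... + c_m q_m = q and c_1² v_1 + ... + c_m² v_m ≤ v. -/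
/-- The determinacy relation of Definition 3.4, generated by Summation,
Scalar multiplication, Relaxation and Transitivity.  Multisets of queries
are represented as lists of pairs (query vector, variance). -/
inductive Det {n : ℕ} : List ((Fin n → ℝ) × ℝ) → ((Fin n → ℝ) × ℝ) → Prop
  | summation (L : List ((Fin n → ℝ) × ℝ)) :
      Det L (((L.map Prod.fst).sum), ((L.map Prod.snd).sum))
  | scalar (q : Fin n → ℝ) (v : ℝ) (c : ℝ) :
      Det [(q, v)] (c • q, c ^ 2 * v)
  | relax (q : Fin n → ℝ) (v v' : ℝ) :
      v ≤ v' → Det [(q, v)] (q, v')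
  | trans (k : ℕ) (Ls : Fin k → List ((Fin n → ℝ) × ℝ))
      (Qs : Fin k → (Fin n → ℝ) × ℝ) (Q : (Fin n → ℝ) × ℝ) :
      (∀ i, Det (Ls i) (Qs i)) → Det (List.ofFn Qs) Q →
      Det ((List.ofFn Ls).flatten) Q



section Aux
variable {n : ℕ}

/-- list-based coefficient predicate -/
def GoodL (S : List ((Fin n → ℝ) × ℝ)) (q : Fin n → ℝ) (v : ℝ) : Prop :=
  ∃ cs : List ℝ, cs.length = S.length ∧
    (List.zipWith (fun a p => a • p.1) cs S).sum = q ∧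
    (List.zipWith (fun a p => a ^ 2 * p.2) cs S).sum ≤ v

lemma goodL_mono {S q v v'} (h : GoodL (n := n) S q v) (hv : v ≤ v') : GoodL S q v' := by
  obtain ⟨cs, h1, h2, h3⟩ := h
  exact ⟨cs, h1, h2, h3.trans hv⟩

lemma goodL_cons {S q v} (p : (Fin n → ℝ) × ℝ) (a : ℝ) (h : GoodL (n := n) S q v) :
    GoodL (p :: S) (a • p.1 + q) (a ^ 2 * p.2 + v) := by
  obtain ⟨cs, h1, h2, h3⟩ := h
  exact ⟨a :: cs, by simp [h1], by simp [h2], by simpa using add_le_add_left h3 (a ^ 2 * p.2)⟩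

lemma goodL_summation (L : List ((Fin n → ℝ) × ℝ)) :
    GoodL L (L.map Prod.fst).sum (L.map Prod.snd).sum := by
  induction L with
  | nil => exact ⟨[], rfl, by simp, by simp⟩
  | cons p L ih =>
    have := goodL_cons p 1 ih
    simpa using this

lemma goodL_append {S1 S2 q1 q2 v1 v2} (h1 : GoodL (n := n) S1 q1 v1)
    (h2 : GoodL (n := n) S2 q2 v2) : GoodL (S1 ++ S2) (q1 + q2) (v1 + v2) := by
  obtain ⟨c1, l1, s1, t1⟩ := h1
  obtain ⟨c2, l2, s2, t2⟩ := h2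
  refine ⟨c1 ++ c2, by simp [l1, l2], ?_, ?_⟩
  · rw [List.zipWith_append (h := l1), List.sum_append, s1, s2]
  · rw [List.zipWith_append (h := l1), List.sum_append]
    exact add_le_add t1 t2

lemma goodL_smul {S q v} (d : ℝ) (h : GoodL (n := n) S q v) :
    GoodL S (d • q) (d ^ 2 * v) := by
  obtain ⟨cs, h1, h2, h3⟩ := h
  refine ⟨cs.map (d * ·), by simp [h1], ?_, ?_⟩
  · rw [List.zipWith_map_left]
    have : (List.zipWith (fun a (p : (Fin n → ℝ) × ℝ) => (d * a) • p.1) cs S)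
        = (List.zipWith (fun a (p : (Fin n → ℝ) × ℝ) => a • p.1) cs S).map (d • ·) := by
      rw [List.map_zipWith]
      simp [mul_smul]
    rw [this, ← List.smul_sum, h2]
  · rw [List.zipWith_map_left]
    have : (List.zipWith (fun a (p : (Fin n → ℝ) × ℝ) => (d * a) ^ 2 * p.2) cs S)
        = (List.zipWith (fun a (p : (Fin n → ℝ) × ℝ) => a ^ 2 * p.2) cs S).map (d ^ 2 * ·) := by
      rw [List.map_zipWith]
      congr 1; funext a p; ring
    rw [this]
    have hs : (List.map (fun x => d ^ 2 * x)
        (List.zipWith (fun a (p : (Fin n → ℝ) × ℝ) => a ^ 2 * p.2) cs S)).sum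
        = d ^ 2 * (List.zipWith (fun a (p : (Fin n → ℝ) × ℝ) => a ^ 2 * p.2) cs S).sum := by
      simpa [smul_eq_mul] using
        (List.smul_sum (r := d ^ 2)
          (l := List.zipWith (fun a (p : (Fin n → ℝ) × ℝ) => a ^ 2 * p.2) cs S)).symm
    rw [hs]
    exact mul_le_mul_of_nonneg_left h3 (sq_nonneg d)

lemma goodL_combine : ∀ (ds : List ℝ) (LQ : List (List ((Fin n → ℝ) × ℝ) × ((Fin n → ℝ) × ℝ))),
    ds.length = LQ.length →
    (∀ x ∈ LQ, GoodL x.1 x.2.1 x.2.2) →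
    GoodL ((LQ.map Prod.fst).flatten)
      (List.zipWith (fun a x => a • x.2.1) ds LQ).sum
      (List.zipWith (fun a x => a ^ 2 * x.2.2) ds LQ).sum := by
  intro ds
  induction ds with
  | nil =>
    intro LQ hl _
    have : LQ = [] := by simpa using (List.length_eq_zero_iff.mp hl.symm)
    subst this
    exact ⟨[], rfl, by simp, by simp⟩
  | cons a ds ih =>
    intro LQ hl hmem
    cases LQ with
    | nil => simp at hl
    | cons x LQ =>
      simp only [List.map_cons, List.flatten_cons, List.zipWith_cons_cons, List.sum_cons]
      exact goodL_append (goodL_smul a (hmem x (by simp)))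
        (ih LQ (by simpa using hl) (fun y hy => hmem y (by simp [hy])))

lemma det_goodL {S : List ((Fin n → ℝ) × ℝ)} {Q : (Fin n → ℝ) × ℝ} (h : Det S Q) :
    GoodL S Q.1 Q.2 := by
  induction h with
  | summation L => exact goodL_summation L
  | scalar q v c =>
    have := goodL_smul c (goodL_summation [(q, v)])
    simpa using this
  | relax q v v' hvv =>
    exact goodL_mono (by simpa using goodL_summation [(q, v)]) hvv
  | trans k Ls Qs Q h1 h2 ih1 ih2 =>
    obtain ⟨cs, hl, hs, hv⟩ := ih2
    have key := goodL_combine cs (List.ofFn (fun i => (Ls i, Qs i)))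
      (by simpa using hl)
      (by
        intro x hx
        rw [List.mem_ofFn] at hx
        obtain ⟨i, rfl⟩ := hx
        exact ih1 i)
    have e1 : (List.ofFn (fun i => (Ls i, Qs i))).map Prod.fst = List.ofFn Ls := by
      rw [List.map_ofFn]; rfl
    have e2 : List.zipWith (fun a (x : List ((Fin n → ℝ) × ℝ) × ((Fin n → ℝ) × ℝ)) => a • x.2.1)
        cs (List.ofFn (fun i => (Ls i, Qs i)))
        = List.zipWith (fun a (p : (Fin n → ℝ) × ℝ) => a • p.1) cs (List.ofFn Qs) := by
      have : List.ofFn Qs = (List.ofFn (fun i => (Ls i, Qs i))).map Prod.snd := by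
        rw [List.map_ofFn]; rfl
      rw [this, List.zipWith_map_right]
    have e3 : List.zipWith (fun a (x : List ((Fin n → ℝ) × ℝ) × ((Fin n → ℝ) × ℝ)) => a ^ 2 * x.2.2)
        cs (List.ofFn (fun i => (Ls i, Qs i)))
        = List.zipWith (fun a (p : (Fin n → ℝ) × ℝ) => a ^ 2 * p.2) cs (List.ofFn Qs) := by
      have : List.ofFn Qs = (List.ofFn (fun i => (Ls i, Qs i))).map Prod.snd := by
        rw [List.map_ofFn]; rfl
      rw [this, List.zipWith_map_right]
    rw [e1, e2, e3, hs] at key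
    exact goodL_mono key hv

lemma zipWith_sum_eq_finsum {α : Type*} [AddCommMonoid α]
    (g : ℝ → ((Fin n → ℝ) × ℝ) → α) (cs : List ℝ) (S : List ((Fin n → ℝ) × ℝ))
    (h : cs.length = S.length) :
    (List.zipWith g cs S).sum = ∑ i : Fin S.length, g (cs.get (Fin.cast h.symm i)) (S.get i) := by
  rw [← List.sum_ofFn]
  congr 1
  apply List.ext_get
  · simp [h]
  · intro i h1 h2
    simp [List.getElem_zipWith]

lemma goodL_iff (S : List ((Fin n → ℝ) × ℝ)) (q : Fin n → ℝ) (v : ℝ) :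
    GoodL S q v ↔
      ∃ c : Fin S.length → ℝ,
        ∑ i, c i • (S.get i).1 = q ∧ ∑ i, (c i) ^ 2 * (S.get i).2 ≤ v := by
  constructor
  · rintro ⟨cs, h1, h2, h3⟩
    refine ⟨fun i => cs.get (Fin.cast h1.symm i), ?_, ?_⟩
    · exact (zipWith_sum_eq_finsum (fun a (p : (Fin n → ℝ) × ℝ) => a • p.1) cs S h1).symm.trans h2
    · exact le_of_eq_of_le
        (zipWith_sum_eq_finsum (fun a (p : (Fin n → ℝ) × ℝ) => a ^ 2 * p.2) cs S h1).symm h3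
  · rintro ⟨c, h2, h3⟩
    have hl : (List.ofFn c).length = S.length := by simp
    refine ⟨List.ofFn c, hl, ?_, ?_⟩
    · rw [zipWith_sum_eq_finsum _ _ _ hl, ← h2]
      congr 1; funext i; simp
    · rw [zipWith_sum_eq_finsum _ _ _ hl]
      refine le_trans (le_of_eq ?_) h3
      congr 1; funext i; simp

lemma flatten_ofFn_singleton (S : List ((Fin n → ℝ) × ℝ)) :
    (List.ofFn (fun i : Fin S.length => [S.get i])).flatten = S := by
  have : (List.ofFn (fun i : Fin S.length => [S.get i]))
      = (List.ofFn S.get).map (fun x => [x]) := by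
    rw [List.map_ofFn]; rfl
  rw [this, List.ofFn_get]
  induction S with
  | nil => rfl
  | cons p S ih => simp_all

lemma goodFin_det (S : List ((Fin n → ℝ) × ℝ)) (q : Fin n → ℝ) (v : ℝ)
    (c : Fin S.length → ℝ)
    (h2 : ∑ i, c i • (S.get i).1 = q) (h3 : ∑ i, (c i) ^ 2 * (S.get i).2 ≤ v) :
    Det S (q, v) := by
  set w : ℝ := ∑ i, (c i) ^ 2 * (S.get i).2 with hw
  set Qs : Fin S.length → (Fin n → ℝ) × ℝ :=
    fun i => (c i • (S.get i).1, (c i) ^ 2 * (S.get i).2) with hQs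
  have h1 : ∀ i, Det [S.get i] (Qs i) := fun i => Det.scalar (S.get i).1 (S.get i).2 (c i)
  have hsum : Det (List.ofFn Qs) (q, w) := by
    have := Det.summation (List.ofFn Qs)
    have ef : (List.ofFn Qs).map Prod.fst = List.ofFn (fun i => c i • (S.get i).1) := by
      rw [List.map_ofFn]; rfl
    have es : (List.ofFn Qs).map Prod.snd = List.ofFn (fun i => (c i) ^ 2 * (S.get i).2) := by
      rw [List.map_ofFn]; rfl
    rw [ef, es, List.sum_ofFn, List.sum_ofFn, h2] at this
    exact this
  have step : Det S (q, w) := by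
    have := Det.trans S.length (fun i => [S.get i]) Qs (q, w) h1 hsum
    rwa [flatten_ofFn_singleton] at this
  have hrel : Det [(q, w)] (q, v) := Det.relax q w v h3
  have final := Det.trans 1 (fun _ => S) (fun _ => (q, w)) (q, v)
    (fun _ => step) (by simpa [List.ofFn_succ] using hrel)
  simpa [List.ofFn_succ] using final

end Aux

/-- determinacy S → (q,v) holds iff there exist coefficients
c with ∑ c_i q_i = q and ∑ c_i² v_i ≤ v. -/
theorem determinacy_iff_coeffs {n : ℕ}
    (S : List ((Fin n → ℝ) × ℝ)) (q : Fin n → ℝ) (v : ℝ) :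
    Det S (q, v) ↔
      ∃ c : Fin S.length → ℝ,
        ∑ i, c i • (S.get i).1 = q ∧ ∑ i, (c i) ^ 2 * (S.get i).2 ≤ v := by
  constructor
  · intro h
    exact (goodL_iff S q v).mp (det_goodL h)
  · rintro ⟨c, h2, h3⟩
    exact goodFin_det S q v c h2 h3
end

section
/- If π is an arbitrage-free price function that is continuous (in v, for each fixed q, and in q at q=0), then lim_{v→∞} π(q, v) = 0 for every query vector q. -/
/-- A price function `π (q, v)` is arbitrage-free if whenever a multiset of
queries {(q_i, v_i)} determines (q, v), i.e. there are coefficients c with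
∑ c_i q_i = q and ∑ c_i² v_i ≤ v, then π(q,v) ≤ ∑ π(q_i,v_i). -/
def ArbitrageFree {n : ℕ} (π : (Fin n → ℝ) → ℝ → ℝ) : Prop :=
  ∀ (m : ℕ) (qs : Fin m → Fin n → ℝ) (vs : Fin m → ℝ) (q : Fin n → ℝ)
    (v : ℝ) (c : Fin m → ℝ),
    (∀ i, 0 ≤ vs i) → 0 ≤ v →
    ∑ i, c i • qs i = q → ∑ i, (c i) ^ 2 * vs i ≤ v →
    π q v ≤ ∑ i, π (qs i) (vs i)

/-- for a continuous arbitrage-free price function, infinite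
noise is free: π(q, v) → 0 as v → ∞. -/
theorem infinite_noise_is_free {n : ℕ} (π : (Fin n → ℝ) → ℝ → ℝ)
    (hpos : ∀ q v, 0 ≤ π q v) (haf : ArbitrageFree π)
    (hcontv : ∀ q, ContinuousOn (fun v => π q v) (Set.Ici (0 : ℝ)))
    (hcontq : ∀ v : ℝ, 0 ≤ v → ContinuousAt (fun q => π q v) (0 : Fin n → ℝ))
    (q : Fin n → ℝ) :
    Filter.Tendsto (fun v => π q v) Filter.atTop (nhds 0) := by
  -- π 0 1 = 0
  have h0 : π 0 1 = 0 := by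
    have := haf 0 (fun i => i.elim0) (fun i => i.elim0) 0 1 (fun i => i.elim0)
      (fun i => i.elim0) zero_le_one (by simp) (by simp)
    simp at this
    exact le_antisymm this (hpos 0 1)
  -- key bound
  have key : ∀ v : ℝ, 1 ≤ v → π q v ≤ π ((Real.sqrt v)⁻¹ • q) 1 := by
    intro v hv
    have hv0 : (0:ℝ) ≤ v := le_trans zero_le_one hv
    have hs : Real.sqrt v ≠ 0 := by
      have : (1:ℝ) ≤ Real.sqrt v := by
        rw [show (1:ℝ) = Real.sqrt 1 by simp]
        exact Real.sqrt_le_sqrt hv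
      linarith
    have := haf 1 (fun _ => (Real.sqrt v)⁻¹ • q) (fun _ => 1) q v
      (fun _ => Real.sqrt v) (fun _ => zero_le_one) hv0
      (by simp [smul_smul, mul_inv_cancel₀ hs])
      (by simp [Real.sq_sqrt hv0])
    simpa using this
  -- π ((√v)⁻¹ • q) 1 → 0
  have hlim : Filter.Tendsto (fun v : ℝ => π ((Real.sqrt v)⁻¹ • q) 1)
      Filter.atTop (nhds 0) := by
    have h1 : Filter.Tendsto (fun v : ℝ => (Real.sqrt v)⁻¹ • q)
        Filter.atTop (nhds (0 : Fin n → ℝ)) := by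
      have hsq : Filter.Tendsto Real.sqrt Filter.atTop Filter.atTop := by
        refine Filter.tendsto_atTop_atTop.2 fun b => ⟨max b 0 ^ 2, fun a ha => ?_⟩
        calc b ≤ max b 0 := le_max_left b 0
          _ = Real.sqrt (max b 0 ^ 2) := (Real.sqrt_sq (le_max_right b 0)).symm
          _ ≤ Real.sqrt a := Real.sqrt_le_sqrt ha
      have : Filter.Tendsto (fun v : ℝ => (Real.sqrt v)⁻¹) Filter.atTop
          (nhds 0) := hsq.inv_tendsto_atTop
      simpa using this.smul_const q
    have := (hcontq 1 zero_le_one).tendsto.comp h1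
    rw [h0] at this
    exact this
  refine squeeze_zero' (Filter.Eventually.of_forall fun v => hpos q v) ?_ hlim
  filter_upwards [Filter.eventually_ge_atTop (1:ℝ)] with v hv using key v hv
end

section
/- For any non-trivial arbitrage-free price function π and any query vector q with π(q,1) > 0, the price cannot decay faster than 1/v: there is no sequence v_i → ∞ with v_i · π(q, v_i) → 0. Equivalently, liminf_{v→∞} v·π(q,v) > 0 whenever π(q,1) > 0. -/
/-- the price of an arbitrage-free price function cannot decay
faster than 1/v: if π(q,1) > 0 there is no sequence v_i → ∞ with
v_i · π(q, v_i) → 0. -/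
theorem price_decay_lower_bound {n : ℕ} (π : (Fin n → ℝ) → ℝ → ℝ)
    (hpos : ∀ q v, 0 ≤ π q v) (haf : ArbitrageFree π)
    (q : Fin n → ℝ) (hq : 0 < π q 1) :
    ¬ ∃ vs : ℕ → ℝ,
        Filter.Tendsto vs Filter.atTop Filter.atTop ∧
        Filter.Tendsto (fun i => vs i * π q (vs i)) Filter.atTop (nhds 0) := by
  rintro ⟨vs, htop, hzero⟩
  -- key: for v ≥ 1, π q 1 ≤ ⌈v⌉₊ * π q v
  have key : ∀ v : ℝ, 1 ≤ v → π q 1 ≤ (⌈v⌉₊ : ℝ) * π q v := by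
    intro v hv
    set m : ℕ := ⌈v⌉₊ with hm
    have hm0 : 0 < m := Nat.ceil_pos.mpr (by linarith)
    have hmR : (0:ℝ) < m := by exact_mod_cast hm0
    have h := haf m (fun _ => q) (fun _ => v) q 1 (fun _ => 1 / m)
      (fun _ => by linarith) zero_le_one ?_ ?_
    · simpa [Finset.sum_const, mul_comm] using h
    · rw [Finset.sum_const, Finset.card_univ, Fintype.card_fin]
      rw [← Nat.cast_smul_eq_nsmul ℝ, smul_smul]
      rw [mul_one_div, div_self (ne_of_gt hmR), one_smul]
    · rw [Finset.sum_const, Finset.card_univ, Fintype.card_fin, nsmul_eq_mul]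
      have hvm : v ≤ (m : ℝ) := Nat.le_ceil v
      rw [div_pow, one_pow]
      have heq : (m:ℝ) * (1 / (m:ℝ)^2 * v) = v / m := by
        field_simp
      rw [heq, div_le_one hmR]; exact hvm
  -- hence for v ≥ 1, v * π q v ≥ π q 1 / 2
  have key2 : ∀ v : ℝ, 1 ≤ v → π q 1 / 2 ≤ v * π q v := by
    intro v hv
    have hc : (⌈v⌉₊ : ℝ) ≤ 2 * v := by
      have := Nat.ceil_lt_add_one (le_trans zero_le_one hv)
      linarith
    have h1 := key v hv
    have hpi := hpos q v
    nlinarith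
  have hev1 : ∀ᶠ i in Filter.atTop, (1:ℝ) ≤ vs i := htop.eventually_ge_atTop 1
  have hev2 : ∀ᶠ i in Filter.atTop, vs i * π q (vs i) < π q 1 / 2 := by
    have := hzero.eventually (eventually_lt_nhds (show (0:ℝ) < π q 1 / 2 by linarith))
    simpa using this
  obtain ⟨i, h1, h2⟩ := (hev1.and hev2).exists
  exact absurd (key2 _ h1) (not_le.mpr h2)
end

section
/- Let π(q,v) = f(q)²/v for some function f : ℝ^n → [0,∞) (with π(q,0) = ∞ when f(q) > 0, π(q,0) = 0 when f(q)=0). Then π is arbitrage-free if and only if f is a seminorm, i.e., f(cq) = |c|·f(q) for all scalars c and f(q_1 + q_2) ≤ f(q_1) + f(q_2). -/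
open scoped ENNReal

/-- Arbitrage-freeness for a price function with values in [0,∞]. -/
def ArbitrageFreeE {n : ℕ} (π : (Fin n → ℝ) → ℝ → ℝ≥0∞) : Prop :=
  ∀ (m : ℕ) (qs : Fin m → Fin n → ℝ) (vs : Fin m → ℝ) (q : Fin n → ℝ)
    (v : ℝ) (c : Fin m → ℝ),
    (∀ i, 0 ≤ vs i) → 0 ≤ v →
    ∑ i, c i • qs i = q → ∑ i, (c i) ^ 2 * vs i ≤ v →
    π q v ≤ ∑ i, π (qs i) (vs i)

/-- `a²/a = a` in `ℝ≥0∞` via `ofReal`, including the `a = 0` case. -/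
lemma ofReal_sq_div_self {a : ℝ} (ha : 0 ≤ a) :
    ENNReal.ofReal (a ^ 2) / ENNReal.ofReal a = ENNReal.ofReal a := by
  rcases eq_or_lt_of_le ha with h | h
  · simp [← h]
  · rw [← ENNReal.ofReal_div_of_pos h, sq, mul_div_assoc, div_self h.ne', mul_one]

/-- the price function π(q,v) = f(q)²/v (with the convention
π(q,0) = ∞ when f(q) > 0 and π(q,0) = 0 when f(q) = 0, realised by ℝ≥0∞
division) is arbitrage-free iff f is a semi-norm. -/
theorem arbitrageFree_iff_seminorm {n : ℕ}
    (f : (Fin n → ℝ) → ℝ) (hf : ∀ q, 0 ≤ f q)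
    (π : (Fin n → ℝ) → ℝ → ℝ≥0∞)
    (hπ : ∀ q v, π q v = ENNReal.ofReal (f q ^ 2) / ENNReal.ofReal v) :
    ArbitrageFreeE π ↔
      ((∀ (c : ℝ) (q : Fin n → ℝ), f (c • q) = |c| * f q) ∧
        ∀ q₁ q₂ : Fin n → ℝ, f (q₁ + q₂) ≤ f q₁ + f q₂) := by
  constructor
  · intro hA
    -- f 0 = 0, via the empty portfolio
    have h0 : f 0 = 0 := by
      have key := hA 0 (fun i => Fin.elim0 i) (fun i => Fin.elim0 i) 0 1
        (fun i => Fin.elim0 i) (fun i => Fin.elim0 i) zero_le_one (by simp) (by simp)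
      rw [hπ] at key
      simp only [Finset.univ_eq_empty, Finset.sum_empty, ENNReal.ofReal_one,
        div_one, nonpos_iff_eq_zero, ENNReal.ofReal_eq_zero] at key
      nlinarith [hf 0, key]
    -- one-sided homogeneity
    have hle : ∀ (c : ℝ) (q : Fin n → ℝ), f (c • q) ≤ |c| * f q := by
      intro c q
      rcases eq_or_ne c 0 with rfl | hc
      · simp [h0]
      have hc2 : (0:ℝ) < c ^ 2 := by positivity
      have key := hA 1 (fun _ => q) (fun _ => 1) (c • q) (c ^ 2) (fun _ => c)
        (fun _ => zero_le_one) hc2.le (by simp) (by simp)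
      simp only [hπ, Fin.sum_univ_one, ENNReal.ofReal_one, div_one] at key
      rw [← ENNReal.ofReal_div_of_pos hc2, ENNReal.ofReal_le_ofReal_iff (sq_nonneg _)] at key
      rw [div_le_iff₀ hc2] at key
      have h2 : f (c • q) ^ 2 ≤ (|c| * f q) ^ 2 := by
        rw [mul_pow, sq_abs]; linarith
      have := Real.sqrt_le_sqrt h2
      rwa [Real.sqrt_sq (hf _), Real.sqrt_sq (mul_nonneg (abs_nonneg c) (hf q))] at this
    constructor
    · intro c q
      rcases eq_or_ne c 0 with rfl | hc
      · simp [h0]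
      refine le_antisymm (hle c q) ?_
      have h2 := hle c⁻¹ (c • q)
      rw [smul_smul, inv_mul_cancel₀ hc, one_smul, abs_inv] at h2
      have hac : (0:ℝ) < |c| := abs_pos.mpr hc
      rw [inv_mul_eq_div, le_div_iff₀ hac] at h2
      linarith
    · intro q₁ q₂
      set a := f q₁ with ha
      set b := f q₂ with hb
      have key := hA 2 ![q₁, q₂] ![a, b] (q₁ + q₂) (a + b) ![1, 1]
        (by
          intro i
          fin_cases i
          · exact hf q₁
          · exact hf q₂)
        (add_nonneg (hf q₁) (hf q₂))
        (by simp [Fin.sum_univ_two])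
        (by simp [Fin.sum_univ_two])
      rw [hπ] at key
      rw [Fin.sum_univ_two] at key
      simp only [hπ, Matrix.cons_val_zero, Matrix.cons_val_one, Matrix.head_cons] at key
      rw [ofReal_sq_div_self (hf q₁), ofReal_sq_div_self (hf q₂),
        ← ENNReal.ofReal_add (hf q₁) (hf q₂)] at key
      rcases eq_or_lt_of_le (add_nonneg (hf q₁) (hf q₂)) with hs | hs
      · -- a + b = 0
      -- then the numerator must vanish
        rw [← hs] at key
        simp only [ENNReal.ofReal_zero] at key
        rcases eq_or_ne (ENNReal.ofReal (f (q₁ + q₂) ^ 2)) 0 with hz | hz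
        · rw [ENNReal.ofReal_eq_zero] at hz
          have : f (q₁ + q₂) = 0 := by nlinarith [hf (q₁ + q₂), sq_nonneg (f (q₁ + q₂))]
          rw [this, ← hs]
        · rw [ENNReal.div_zero hz] at key
          simp at key
      · -- a + b > 0
        rw [ENNReal.div_le_iff (ENNReal.ofReal_pos.mpr hs).ne' ENNReal.ofReal_ne_top] at key
        rw [← ENNReal.ofReal_mul (add_nonneg (hf q₁) (hf q₂)),
          ENNReal.ofReal_le_ofReal_iff (by positivity)] at key
        have h2 : f (q₁ + q₂) ^ 2 ≤ (a + b) ^ 2 := by rw [sq]; linarith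
        have := Real.sqrt_le_sqrt h2
        rwa [Real.sqrt_sq (hf _), Real.sqrt_sq (add_nonneg (hf q₁) (hf q₂))] at this
  · rintro ⟨hhom, hsub⟩
    have h0 : f 0 = 0 := by
      have := hhom 0 0
      simpa using this
    intro m qs vs q v c hvs hv hsum hcv
    by_cases hbad : ∃ i, vs i = 0 ∧ f (qs i) ≠ 0
    · obtain ⟨i, hvi, hfi⟩ := hbad
      have hterm : π (qs i) (vs i) = ∞ := by
        rw [hπ, hvi, ENNReal.ofReal_zero, ENNReal.div_zero]
        rw [Ne, ENNReal.ofReal_eq_zero, not_le]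
        have := hf (qs i)
        positivity
      calc π q v ≤ ∞ := le_top
        _ = π (qs i) (vs i) := hterm.symm
        _ ≤ ∑ j, π (qs j) (vs j) :=
            Finset.single_le_sum (f := fun j => π (qs j) (vs j))
              (fun j _ => zero_le) (Finset.mem_univ i)
    · push_neg at hbad
      set b : Fin m → ℝ := fun i => f (qs i) / Real.sqrt (vs i) with hbdef
      set S : ℝ := ∑ i, b i ^ 2 with hSdef
      have hS0 : 0 ≤ S := Finset.sum_nonneg fun i _ => sq_nonneg _
      -- f q ≤ ∑ |c i| * f (qs i)
      have hfq : f q ≤ ∑ i, |c i| * f (qs i) := by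
        calc f q = f (∑ i, c i • qs i) := by rw [hsum]
          _ ≤ ∑ i, f (c i • qs i) := Finset.le_sum_of_subadditive f h0.le hsub _ _
          _ = ∑ i, |c i| * f (qs i) := by
              exact Finset.sum_congr rfl fun i _ => hhom (c i) (qs i)
      -- Cauchy-Schwarz
      have hCS : (∑ i, |c i| * f (qs i)) ^ 2 ≤ (∑ i, c i ^ 2 * vs i) * S := by
        have key := Finset.sum_mul_sq_le_sq_mul_sq Finset.univ
          (fun i => |c i| * Real.sqrt (vs i)) b
        have e1 : ∀ i, (|c i| * Real.sqrt (vs i)) * b i = |c i| * f (qs i) := by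
          intro i
          rcases eq_or_lt_of_le (hvs i) with h | h
          · rw [hbdef]
            simp [← h, hbad i h.symm]
          · have hsv : Real.sqrt (vs i) ≠ 0 := by positivity
            rw [hbdef]
            field_simp
        have e2 : ∀ i, (|c i| * Real.sqrt (vs i)) ^ 2 = c i ^ 2 * vs i := by
          intro i
          rw [mul_pow, sq_abs, Real.sq_sqrt (hvs i)]
        calc (∑ i, |c i| * f (qs i)) ^ 2
            = (∑ i, (|c i| * Real.sqrt (vs i)) * b i) ^ 2 := by
              congr 1; exact Finset.sum_congr rfl fun i _ => (e1 i).symm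
          _ ≤ (∑ i, (|c i| * Real.sqrt (vs i)) ^ 2) * ∑ i, b i ^ 2 := key
          _ = (∑ i, c i ^ 2 * vs i) * S := by
              rw [hSdef]; congr 1; exact Finset.sum_congr rfl fun i _ => e2 i
      have hmain : f q ^ 2 ≤ v * S := by
        have h1 : (∑ i, |c i| * f (qs i)) ^ 2 ≤ v * S := by
          refine hCS.trans (mul_le_mul_of_nonneg_right hcv hS0)
        have h2 : f q ^ 2 ≤ (∑ i, |c i| * f (qs i)) ^ 2 := by
          have hnn : 0 ≤ ∑ i, |c i| * f (qs i) :=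
            Finset.sum_nonneg fun i _ => mul_nonneg (abs_nonneg _) (hf _)
          nlinarith [hf q]
        linarith
      -- the RHS equals ofReal S
      have hRHS : ∑ i, π (qs i) (vs i) = ENNReal.ofReal S := by
        rw [hSdef, ENNReal.ofReal_sum_of_nonneg fun i _ => sq_nonneg _]
        refine Finset.sum_congr rfl fun i _ => ?_
        rw [hπ]
        rcases eq_or_lt_of_le (hvs i) with h | h
        · have hfz := hbad i h.symm
          rw [hbdef]
          simp [← h, hfz]
        · rw [← ENNReal.ofReal_div_of_pos h, hbdef]
          congr 1
          rw [div_pow, Real.sq_sqrt (hvs i)]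
      rw [hRHS, hπ]
      rcases eq_or_lt_of_le hv with hv0 | hv0
      · -- v = 0 forces f q = 0
        have : f q = 0 := by nlinarith [hf q, sq_nonneg (f q)]
        simp [this]
      · rw [ENNReal.div_le_iff (ENNReal.ofReal_pos.mpr hv0).ne' ENNReal.ofReal_ne_top]
        rw [← ENNReal.ofReal_mul hS0]
        exact ENNReal.ofReal_le_ofReal (by rw [mul_comm]; exact hmain)
end

section
/- If f is a seminorm on ℝ^n and there exist coefficients c_1,...,c_m with Σ c_i q_i = q and Σ c_i² v_i ≤ v (where all v_i > 0 and v > 0), then f(q)²/v ≤ Σ_{i=1}^m f(q_i)²/v_i. -/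
lemma seminorm_sum_le' {n : ℕ} (f : (Fin n → ℝ) → ℝ)
    (hhom : ∀ (c : ℝ) (q : Fin n → ℝ), f (c • q) = |c| * f q)
    (htri : ∀ q₁ q₂ : Fin n → ℝ, f (q₁ + q₂) ≤ f q₁ + f q₂)
    {m : ℕ} (s : Finset (Fin m)) (g : Fin m → Fin n → ℝ) :
    f (∑ i ∈ s, g i) ≤ ∑ i ∈ s, f (g i) := by
  classical
  induction s using Finset.induction with
  | empty =>
    simp only [Finset.sum_empty]
    have h0 : f ((0:ℝ) • (0 : Fin n → ℝ)) = |(0:ℝ)| * f 0 := hhom 0 0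
    simpa using h0.le
  | insert _ _ hx ih =>
    rw [Finset.sum_insert hx, Finset.sum_insert hx]
    exact le_trans (htri _ _) (by linarith)

/-- if f is a seminorm and ∑ c_i q_i = q, ∑ c_i² v_i ≤ v with
positive variances, then f(q)²/v ≤ ∑ f(q_i)²/v_i (arbitrage-freeness of
π(q,v) = f(q)²/v, via Cauchy–Schwarz). -/
theorem seminorm_price_arbitrage_free {n m : ℕ}
    (f : (Fin n → ℝ) → ℝ) (hf : ∀ q, 0 ≤ f q)
    (hhom : ∀ (c : ℝ) (q : Fin n → ℝ), f (c • q) = |c| * f q)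
    (htri : ∀ q₁ q₂ : Fin n → ℝ, f (q₁ + q₂) ≤ f q₁ + f q₂)
    (qs : Fin m → Fin n → ℝ) (vs : Fin m → ℝ) (hvs : ∀ i, 0 < vs i)
    (q : Fin n → ℝ) (v : ℝ) (hv : 0 < v) (c : Fin m → ℝ)
    (hlin : ∑ i, c i • qs i = q)
    (hvar : ∑ i, (c i) ^ 2 * vs i ≤ v) :
    f q ^ 2 / v ≤ ∑ i, f (qs i) ^ 2 / vs i := by
  have h1 : f q ≤ ∑ i, |c i| * f (qs i) := by
    calc f q = f (∑ i, c i • qs i) := by rw [hlin]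
    _ ≤ ∑ i, f (c i • qs i) := seminorm_sum_le' f hhom htri _ _
    _ = ∑ i, |c i| * f (qs i) := by simp [hhom]
  -- Cauchy-Schwarz with a i = |c i| * √(vs i), b i = f (qs i) / √(vs i)
  have key : (∑ i, |c i| * f (qs i)) ^ 2 ≤
      (∑ i, (c i) ^ 2 * vs i) * ∑ i, f (qs i) ^ 2 / vs i := by
    have := Finset.sum_mul_sq_le_sq_mul_sq Finset.univ
      (fun i => |c i| * Real.sqrt (vs i)) (fun i => f (qs i) / Real.sqrt (vs i))
    have e1 : ∀ i : Fin m, |c i| * Real.sqrt (vs i) * (f (qs i) / Real.sqrt (vs i))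
        = |c i| * f (qs i) := by
      intro i
      have hs : Real.sqrt (vs i) ≠ 0 := (Real.sqrt_pos.mpr (hvs i)).ne'
      field_simp
    have e2 : ∀ i : Fin m, (|c i| * Real.sqrt (vs i)) ^ 2 = (c i) ^ 2 * vs i := by
      intro i
      rw [mul_pow, sq_abs, Real.sq_sqrt (hvs i).le]
    have e3 : ∀ i : Fin m, (f (qs i) / Real.sqrt (vs i)) ^ 2 = f (qs i) ^ 2 / vs i := by
      intro i
      rw [div_pow, Real.sq_sqrt (hvs i).le]
    simpa only [e1, e2, e3] using this
  have hRHS : 0 ≤ ∑ i, f (qs i) ^ 2 / vs i :=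
    Finset.sum_nonneg fun i _ => div_nonneg (sq_nonneg _) (hvs i).le
  have h2 : f q ^ 2 ≤ v * ∑ i, f (qs i) ^ 2 / vs i := by
    calc f q ^ 2 ≤ (∑ i, |c i| * f (qs i)) ^ 2 := by
          apply pow_le_pow_left₀ (hf q) h1
    _ ≤ (∑ i, (c i) ^ 2 * vs i) * ∑ i, f (qs i) ^ 2 / vs i := key
    _ ≤ v * ∑ i, f (qs i) ^ 2 / vs i := mul_le_mul_of_nonneg_right hvar hRHS
  rw [div_le_iff₀ hv]
  linarith [h2]
end

section
/- Let f : [0,∞)^k → [0,∞) be non-decreasing with f(0) = 0 and continuous second partial derivatives. If ∂²f/∂x_i∂x_j ≤ 0 for all i, j, then f is subadditive: f(x + y) ≤ f(x) + f(y) for all x, y ∈ [0,∞)^k. -/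
/-- Lemma on concave functions: a non-decreasing function
f : [0,∞)^k → [0,∞) with f(0) = 0, continuous second partial derivatives,
and all second partials ≤ 0 on the nonnegative orthant, is subadditive. -/
theorem nonpositive_second_partials_subadditive {k : ℕ}
    (f : (Fin k → ℝ) → ℝ)
    (hnonneg : ∀ x : Fin k → ℝ, (∀ i, 0 ≤ x i) → 0 ≤ f x)
    (hmono : ∀ x y : Fin k → ℝ, (∀ i, 0 ≤ x i) → (∀ i, x i ≤ y i) → f x ≤ f y)
    (h0 : f 0 = 0)
    (hC2 : ContDiff ℝ 2 f)
    (hconc : ∀ x : Fin k → ℝ, (∀ i, 0 ≤ x i) → ∀ i j : Fin k,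
      fderiv ℝ (fun y => fderiv ℝ f y (Pi.single i 1)) x (Pi.single j 1) ≤ 0)
    (x y : Fin k → ℝ) (hx : ∀ i, 0 ≤ x i) (hy : ∀ i, 0 ≤ y i) :
    f (x + y) ≤ f x + f y := by
  set F := fderiv ℝ f with hFdef
  have hF : ContDiff ℝ 1 F := hC2.fderiv_right (by norm_num)
  have hFdiff : Differentiable ℝ F := hF.differentiable (by norm_num)
  have hfdiff : Differentiable ℝ f := hC2.differentiable (by norm_num)
  -- rewrite hconc in terms of fderiv F
  have hBasis : ∀ z : Fin k → ℝ, ∀ w : Fin k → ℝ,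
      fderiv ℝ (fun p => F p w) z = (ContinuousLinearMap.apply ℝ ℝ w).comp (fderiv ℝ F z) := by
    intro z w
    have h1 : HasFDerivAt (fun p => F p w)
        ((ContinuousLinearMap.apply ℝ ℝ w).comp (fderiv ℝ F z)) z :=
      (ContinuousLinearMap.apply ℝ ℝ w).hasFDerivAt.comp z (hFdiff z).hasFDerivAt
    exact h1.fderiv
  have keyA : ∀ z : Fin k → ℝ, (∀ i, 0 ≤ z i) → ∀ v w : Fin k → ℝ,
      (∀ i, 0 ≤ v i) → (∀ i, 0 ≤ w i) → (fderiv ℝ F z v) w ≤ 0 := by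
    intro z hz v w hv hw
    have hsingle : ∀ i j : Fin k,
        (fderiv ℝ F z (Pi.single j 1)) (Pi.single i 1) ≤ 0 := by
      intro i j
      have := hconc z hz i j
      rwa [hBasis z (Pi.single i 1)] at this
    have hsum : ∀ v : Fin k → ℝ, v = ∑ j, (v j) • (Pi.single j 1 : Fin k → ℝ) := by
      intro v
      ext m
      rw [Finset.sum_apply]
      simp [Pi.single_apply]
    have hvsum := hsum v
    have hwsum := hsum w
    calc (fderiv ℝ F z v) w
        = ∑ j, (v j) * ((fderiv ℝ F z (Pi.single j 1)) w) := by
          conv_lhs => rw [hvsum]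
          rw [map_sum]
          simp [ContinuousLinearMap.sum_apply]
      _ = ∑ j, (v j) * (∑ i, (w i) * ((fderiv ℝ F z (Pi.single j 1)) (Pi.single i 1))) := by
          congr 1; ext j
          congr 1
          conv_lhs => rw [hwsum]
          rw [map_sum]
          simp
      _ ≤ 0 := by
          apply Finset.sum_nonpos
          intro j _
          apply mul_nonpos_of_nonneg_of_nonpos (hv j)
          apply Finset.sum_nonpos
          intro i _
          exact mul_nonpos_of_nonneg_of_nonpos (hw i) (hsingle i j)
  -- key B : F (z+u) v ≤ F z v
  have keyB : ∀ z u v : Fin k → ℝ, (∀ i, 0 ≤ z i) → (∀ i, 0 ≤ u i) → (∀ i, 0 ≤ v i) →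
      F (z + u) v ≤ F z v := by
    intro z u v hz hu hv
    set g : ℝ → ℝ := fun s => F (z + s • u) v with hgdef
    have hgd : ∀ s : ℝ, HasDerivAt g ((fderiv ℝ F (z + s • u) u) v) s := by
      intro s
      have hline : HasDerivAt (fun s : ℝ => z + s • u) u s := by
        simpa using ((hasDerivAt_id s).smul_const u).const_add z
      have hG : HasFDerivAt (fun p => F p v)
          ((ContinuousLinearMap.apply ℝ ℝ v).comp (fderiv ℝ F (z + s • u))) (z + s • u) :=
        (ContinuousLinearMap.apply ℝ ℝ v).hasFDerivAt.comp _ (hFdiff _).hasFDerivAt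
      exact (by simpa using hG.comp_hasDerivAt s hline : HasDerivAt ((fun p => F p v) ∘ fun s : ℝ => z + s • u) ((fderiv ℝ F (z + s • u) u) v) s)
    have hanti : AntitoneOn g (Set.Icc (0:ℝ) 1) := by
      apply antitoneOn_of_deriv_nonpos (convex_Icc 0 1)
      · exact fun s _ => ((hgd s).continuousAt).continuousWithinAt
      · intro s _
        exact ((hgd s).differentiableAt).differentiableWithinAt
      · intro s hs
        rw [interior_Icc] at hs
        rw [(hgd s).deriv]
        apply keyA
        · intro i; have := hz i; have := hu i; have : 0 ≤ s := le_of_lt hs.1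
          simp only [Pi.add_apply, Pi.smul_apply, smul_eq_mul]
          positivity
        · exact hu
        · exact hv
    have := hanti (Set.mem_Icc.mpr ⟨le_rfl, zero_le_one⟩)
        (Set.mem_Icc.mpr ⟨zero_le_one, le_rfl⟩) zero_le_one
    simpa [hgdef] using this
  -- main argument
  set φ : ℝ → ℝ := fun t => f (x + t • y) - f (t • y) with hφdef
  have hφd : ∀ t : ℝ, HasDerivAt φ (F (x + t • y) y - F (t • y) y) t := by
    intro t
    have hline1 : HasDerivAt (fun t : ℝ => x + t • y) y t := by
      simpa using ((hasDerivAt_id t).smul_const y).const_add x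
    have hline2 : HasDerivAt (fun t : ℝ => t • y) y t := by
      simpa using (hasDerivAt_id t).smul_const y
    have h1 : HasDerivAt (fun t : ℝ => f (x + t • y)) (F (x + t • y) y) t :=
      (hfdiff _).hasFDerivAt.comp_hasDerivAt t hline1
    have h2 : HasDerivAt (fun t : ℝ => f (t • y)) (F (t • y) y) t :=
      (hfdiff _).hasFDerivAt.comp_hasDerivAt t hline2
    exact h1.sub h2
  have hanti : AntitoneOn φ (Set.Icc (0:ℝ) 1) := by
    apply antitoneOn_of_deriv_nonpos (convex_Icc 0 1)
    · exact fun t _ => ((hφd t).continuousAt).continuousWithinAt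
    · intro t _
      exact ((hφd t).differentiableAt).differentiableWithinAt
    · intro t ht
      rw [interior_Icc] at ht
      rw [(hφd t).deriv]
      have hty : ∀ i, 0 ≤ (t • y) i := by
        intro i; have := hy i; have : 0 ≤ t := le_of_lt ht.1
        simp only [Pi.smul_apply, smul_eq_mul]; positivity
      have := keyB (t • y) x y hty hx hy
      have hcomm : t • y + x = x + t • y := add_comm _ _
      rw [hcomm] at this
      linarith
  have := hanti (Set.mem_Icc.mpr ⟨le_rfl, zero_le_one⟩)
      (Set.mem_Icc.mpr ⟨zero_le_one, le_rfl⟩) zero_le_one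
  simp only [hφdef, one_smul, zero_smul, add_zero] at this
  rw [h0] at this
  linarith
end

section
/- Let the contract functions be linear, W_i(ε) = c_i·ε with c_i > 0, and define micro-payments μ_i(q,v) = (γ·c_i/√(v/2))·|q_i| under the Laplacian mechanism L. Then: (1) each μ_i is fair (q_i = 0 implies μ_i(q,v) = 0); (2) each μ_i is arbitrage-free as a price function; (3) each μ_i is compensating: μ_i(q,v) ≥ W_i(ε_i(L_{(q,v)})). Moreover, π(Q) = Σ_i μ_i(Q) is an arbitrage-free price function with π(Q) ≥ Σ_i μ_i(Q), so the resulting framework is balanced. -/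
open MeasureTheory

/-- A mechanism `K`, viewed as a Markov kernel sending a database
x ∈ X^n to a probability distribution on outputs, has privacy loss at most
ε with respect to data item i (`ε_i(K) ≤ ε`) if for every database with
entries in X and every measurable output set S, the output probabilities
with and without item i differ by at most a factor e^ε. -/
def PrivLossLE {n : ℕ} (X : Set ℝ) (K : (Fin n → ℝ) → MeasureTheory.Measure ℝ)
    (i : Fin n) (ε : ℝ) : Prop :=
  ∀ x : Fin n → ℝ, (∀ j, x j ∈ X) → ∀ S : Set ℝ, MeasurableSet S →
    K x S ≤ ENNReal.ofReal (Real.exp ε) * K (Function.update x i 0) S ∧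
    K (Function.update x i 0) S ≤ ENNReal.ofReal (Real.exp ε) * K x S

/-- The Laplace distribution Lap(b) on ℝ, with density (1/2b)·e^{-|t|/b}. -/
noncomputable def lapMeasure (b : ℝ) : MeasureTheory.Measure ℝ :=
  MeasureTheory.volume.withDensity fun t =>
    ENNReal.ofReal ((1 / (2 * b)) * Real.exp (-|t| / b))

/-- The Laplacian mechanism for the query Q = (q, v): it returns
q·x + ρ where ρ ~ Lap(b) with b = √(v/2). -/
noncomputable def lapMech {n : ℕ} (q : Fin n → ℝ) (v : ℝ) :
    (Fin n → ℝ) → MeasureTheory.Measure ℝ := fun x =>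
  MeasureTheory.Measure.map (fun t => (∑ j, q j * x j) + t)
    (lapMeasure (Real.sqrt (v / 2)))

/-- A price function `π (q, v)` (defined for positive variances) is
arbitrage-free if whenever {(q_i, v_i)} determines (q, v), i.e. there are
coefficients c with ∑ c_i q_i = q and ∑ c_i² v_i ≤ v, then
π(q,v) ≤ ∑ π(q_i,v_i). -/
def ArbitrageFreePos {n : ℕ} (π : (Fin n → ℝ) → ℝ → ℝ) : Prop :=
  ∀ (m : ℕ) (qs : Fin m → Fin n → ℝ) (vs : Fin m → ℝ) (q : Fin n → ℝ)
    (v : ℝ) (c : Fin m → ℝ),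
    (∀ i, 0 < vs i) → 0 < v →
    ∑ i, c i • qs i = q → ∑ i, (c i) ^ 2 * vs i ≤ v →
    π q v ≤ ∑ i, π (qs i) (vs i)


lemma core_ineq {m : ℕ} (c a vs : Fin m → ℝ) (v : ℝ)
    (hvs : ∀ j, 0 < vs j) (hv : 0 < v) (hle : ∑ j, (c j) ^ 2 * vs j ≤ v) :
    |∑ j, c j * a j| / Real.sqrt v ≤ ∑ j, |a j| / Real.sqrt (vs j) := by
  have hsv : 0 < Real.sqrt v := Real.sqrt_pos.2 hv
  rw [div_le_iff₀ hsv]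
  set g : Fin m → ℝ := fun j => |a j| / Real.sqrt (vs j) with hg
  have hgnn : ∀ j, 0 ≤ g j := fun j => div_nonneg (abs_nonneg _) (Real.sqrt_nonneg _)
  have h1 : |∑ j, c j * a j| ≤ ∑ j, (|c j| * Real.sqrt (vs j)) * g j := by
    refine (Finset.abs_sum_le_sum_abs _ _).trans (le_of_eq ?_)
    refine Finset.sum_congr rfl fun j _ => ?_
    have hsj : (0:ℝ) < Real.sqrt (vs j) := Real.sqrt_pos.2 (hvs j)
    rw [abs_mul, hg]
    field_simp
  have h2 : (∑ j, (|c j| * Real.sqrt (vs j)) * g j) ^ 2 ≤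
      (∑ j, (|c j| * Real.sqrt (vs j)) ^ 2) * ∑ j, (g j) ^ 2 :=
    Finset.sum_mul_sq_le_sq_mul_sq _ _ _
  have h3 : ∑ j, (|c j| * Real.sqrt (vs j)) ^ 2 ≤ v := by
    refine le_trans (le_of_eq ?_) hle
    refine Finset.sum_congr rfl fun j _ => ?_
    rw [mul_pow, sq_abs, Real.sq_sqrt (hvs j).le]
  have h4 : ∑ j, (g j) ^ 2 ≤ (∑ j, g j) ^ 2 :=
    Finset.sum_sq_le_sq_sum_of_nonneg (fun j _ => hgnn j)
  have hsum_nn : 0 ≤ ∑ j, (|c j| * Real.sqrt (vs j)) * g j :=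
    Finset.sum_nonneg fun j _ => mul_nonneg (mul_nonneg (abs_nonneg _) (Real.sqrt_nonneg _)) (hgnn j)
  have hgs_nn : 0 ≤ ∑ j, g j := Finset.sum_nonneg fun j _ => hgnn j
  have h5 : (∑ j, (|c j| * Real.sqrt (vs j)) * g j) ^ 2 ≤ v * (∑ j, g j) ^ 2 := by
    calc _ ≤ (∑ j, (|c j| * Real.sqrt (vs j)) ^ 2) * ∑ j, (g j) ^ 2 := h2
    _ ≤ v * (∑ j, g j) ^ 2 := by
        apply mul_le_mul h3 h4 (Finset.sum_nonneg fun j _ => sq_nonneg _) hv.le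
  have h6 : ∑ j, (|c j| * Real.sqrt (vs j)) * g j ≤ Real.sqrt v * ∑ j, g j := by
    have := Real.sqrt_le_sqrt h5
    rwa [Real.sqrt_sq hsum_nn, Real.sqrt_mul hv.le, Real.sqrt_sq hgs_nn] at this
  calc |∑ j, c j * a j| ≤ _ := h1
    _ ≤ Real.sqrt v * ∑ j, g j := h6
    _ = (∑ j, g j) * Real.sqrt v := mul_comm _ _

lemma lap_shift_apply (b s : ℝ) (S : Set ℝ) (hS : MeasurableSet S) :
    Measure.map (fun t => s + t) (lapMeasure b) S =
      ∫⁻ u, S.indicator (fun u => ENNReal.ofReal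
        ((1 / (2 * b)) * Real.exp (-|u - s| / b))) u := by
  rw [Measure.map_apply (measurable_const_add s) hS]
  rw [lapMeasure, withDensity_apply _ (hS.preimage (measurable_const_add s))]
  rw [← lintegral_indicator (hS.preimage (measurable_const_add s))]
  have key : ∀ t : ℝ, ((fun t => s + t) ⁻¹' S).indicator
      (fun t => ENNReal.ofReal ((1 / (2 * b)) * Real.exp (-|t| / b))) t =
      S.indicator (fun u => ENNReal.ofReal ((1 / (2 * b)) * Real.exp (-|u - s| / b))) (s + t) := by
    intro t
    by_cases ht : s + t ∈ S
    · rw [Set.indicator_of_mem ht, Set.indicator_of_mem (by simpa using ht)]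
      simp
    · rw [Set.indicator_of_notMem ht, Set.indicator_of_notMem (by simpa using ht)]
  simp_rw [key]
  exact lintegral_add_left_eq_self _ s

lemma lap_compare (b : ℝ) (hb : 0 < b) (s s' ε : ℝ) (hss : |s - s'| ≤ ε * b)
    (S : Set ℝ) (hS : MeasurableSet S) :
    Measure.map (fun t => s + t) (lapMeasure b) S ≤
      ENNReal.ofReal (Real.exp ε) * Measure.map (fun t => s' + t) (lapMeasure b) S := by
  rw [lap_shift_apply b s S hS, lap_shift_apply b s' S hS, ← lintegral_const_mul']
  · refine lintegral_mono fun u => ?_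
    by_cases hu : u ∈ S
    · rw [Set.indicator_of_mem hu, Set.indicator_of_mem hu]
      rw [← ENNReal.ofReal_mul (Real.exp_nonneg ε)]
      refine ENNReal.ofReal_le_ofReal ?_
      rw [← mul_assoc, mul_comm (Real.exp ε), mul_assoc, ← Real.exp_add]
      have h2b : (0:ℝ) ≤ 1 / (2 * b) := by positivity
      refine mul_le_mul_of_nonneg_left (Real.exp_le_exp.2 ?_) h2b
      have htri : |u - s'| - |u - s| ≤ |s - s'| := by
        have h := abs_sub_abs_le_abs_sub (u - s') (u - s)
        have h0 : (u - s') - (u - s) = s - s' := by ring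
        rw [h0] at h; linarith
      have hdiv : (|u - s'| - |u - s|) / b ≤ ε := by
        rw [div_le_iff₀ hb]; linarith
      rw [sub_div] at hdiv
      rw [neg_div, neg_div]
      linarith
    · rw [Set.indicator_of_notMem hu, Set.indicator_of_notMem hu]
      simp
  · exact ENNReal.ofReal_ne_top

/-- with linear contracts W_i(ε) = c_i·ε (c_i > 0) and the
Laplacian mechanism, the micro-payments μ_i(q,v) = (γ·c_i/√(v/2))·|q_i| are
fair, micro arbitrage-free, and compensating (ε_i(L_(q,v)) ≤ μ_i(q,v)/c_i);
moreover π = ∑ μ_i is arbitrage-free and cost-recovering, so the framework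
is balanced. -/
theorem balanced_framework_laplace {n : ℕ} (X : Set ℝ) (γ : ℝ)
    (hγ0 : 0 ≤ γ) (hγ : ∀ y ∈ X, |y| ≤ γ)
    (cs : Fin n → ℝ) (hcs : ∀ i, 0 < cs i)
    (μ : Fin n → (Fin n → ℝ) → ℝ → ℝ)
    (hμ : ∀ (i : Fin n) (q : Fin n → ℝ) (v : ℝ),
      μ i q v = γ * cs i / Real.sqrt (v / 2) * |q i|) :
    (∀ (i : Fin n) (q : Fin n → ℝ) (v : ℝ), q i = 0 → μ i q v = 0) ∧
    (∀ i, ArbitrageFreePos (μ i)) ∧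
    (∀ (i : Fin n) (q : Fin n → ℝ) (v : ℝ), 0 < v →
      PrivLossLE X (lapMech q v) i (μ i q v / cs i)) ∧
    ArbitrageFreePos (fun q v => ∑ i, μ i q v) ∧
    (∀ (q : Fin n → ℝ) (v : ℝ), ∑ i, μ i q v ≤ ∑ i, μ i q v) := by
  have hn2 : (0:ℝ) < Real.sqrt 2 := by positivity
  -- micro arbitrage-freeness
  have micro : ∀ i, ArbitrageFreePos (μ i) := by
    intro i m qs vs q v c hvs hv hq hvle
    have hqi : q i = ∑ j, c j * qs j i := by
      rw [← hq]; simp [Finset.sum_apply]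
    have hcore := core_ineq c (fun j => qs j i) vs v hvs hv hvle
    rw [← hqi] at hcore
    have hKnn : 0 ≤ γ * cs i * Real.sqrt 2 :=
      mul_nonneg (mul_nonneg hγ0 (hcs i).le) hn2.le
    have hform : ∀ (w : ℝ), 0 < w → ∀ r : ℝ,
        γ * cs i / Real.sqrt (w / 2) * |r| = (γ * cs i * Real.sqrt 2) * (|r| / Real.sqrt w) := by
      intro w hw r
      rw [Real.sqrt_div hw.le 2]
      have hsw : (0:ℝ) < Real.sqrt w := Real.sqrt_pos.2 hw
      field_simp
    calc μ i q v = (γ * cs i * Real.sqrt 2) * (|q i| / Real.sqrt v) := by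
          rw [hμ, hform v hv]
      _ ≤ (γ * cs i * Real.sqrt 2) * ∑ j, |qs j i| / Real.sqrt (vs j) :=
          mul_le_mul_of_nonneg_left hcore hKnn
      _ = ∑ j, μ i (qs j) (vs j) := by
          rw [Finset.mul_sum]
          exact Finset.sum_congr rfl fun j _ => by rw [hμ, hform (vs j) (hvs j)]
  refine ⟨?_, micro, ?_, ?_, fun q v => le_refl _⟩
  · intro i q v h
    rw [hμ, h, abs_zero, mul_zero]
  · -- privacy loss bound
    intro i q v hv x hx S hS
    set b : ℝ := Real.sqrt (v / 2) with hb
    have hbpos : 0 < b := Real.sqrt_pos.2 (by linarith)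
    set ε : ℝ := μ i q v / cs i with hε
    set s : ℝ := ∑ j, q j * x j with hs
    set s' : ℝ := ∑ j, q j * Function.update x i 0 j with hs'
    have hss' : s - s' = q i * x i := by
      have : ∀ j, q j * Function.update x i 0 j
          = q j * x j - (if j = i then q j * x j else 0) := by
        intro j
        rcases eq_or_ne j i with rfl | h
        · simp [Function.update_apply]
        · simp [Function.update_apply, h]
      rw [hs', hs]
      simp_rw [this, Finset.sum_sub_distrib, Finset.sum_ite_eq' Finset.univ i]
      simp
    have hεb : |s - s'| ≤ ε * b := by
      rw [hss', hε, hμ]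
      have : γ * cs i / b * |q i| / cs i * b = γ * |q i| := by
        field_simp [hbpos.ne', (hcs i).ne']
      rw [this, abs_mul]
      have hxi : |x i| ≤ γ := hγ _ (hx i)
      calc |q i| * |x i| ≤ |q i| * γ :=
            mul_le_mul_of_nonneg_left hxi (abs_nonneg _)
        _ = γ * |q i| := mul_comm _ _
    have hεb' : |s' - s| ≤ ε * b := by rwa [abs_sub_comm]
    constructor
    · exact lap_compare b hbpos s s' ε hεb S hS
    · exact lap_compare b hbpos s' s ε hεb' S hS
  · -- aggregate arbitrage-freeness
    intro m qs vs q v c hvs hv hq hvle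
    calc ∑ i, μ i q v ≤ ∑ i, ∑ j, μ i (qs j) (vs j) :=
          Finset.sum_le_sum fun i _ => micro i m qs vs q v c hvs hv hq hvle
      _ = ∑ j, ∑ i, μ i (qs j) (vs j) := Finset.sum_comm
end
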